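/- With M₂(ℓ, d) denoting the maximal size of a binary code of length ℓ and minimum distance d, the function ℓ ↦ M₂(ℓ, 4) is not log-convex: M₂(8,4)^2 > M₂(7,4)·M₂(9,4). Concretely, M₂(7,4)=8, M₂(8,4)=16, M₂(9,4)=20. -/

import Mathlib

set_option maxRecDepth 8000

open Finset

def isBinCode (ℓ d : ℕ) (C : Finset (Fin ℓ → Bool)) : Prop :=
  ∀ c ∈ C, ∀ c' ∈ C, c ≠ c' → d ≤ hammingDist c c'

noncomputable def M2 (ℓ d : ℕ) : ℕ :=
  sSup {M | ∃ C : Finset (Fin ℓ → Bool), isBinCode ℓ d C ∧ C.card = M}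

open Finset

def chi (b : Bool) : ℤ := if b then -1 else 1

lemma chi_sq (b : Bool) : chi b * chi b = 1 := by cases b <;> simp [chi]

lemma chi_mul_eq (a b : Bool) :
    chi a * chi b = 1 - 2 * (if a ≠ b then 1 else 0) := by
  cases a <;> cases b <;> norm_num [chi]

lemma hdist_cast {n : ℕ} (x y : Fin n → Bool) :
    (hammingDist x y : ℤ) = ∑ i, (if x i ≠ y i then (1:ℤ) else 0) := by
  rw [hammingDist, Finset.card_filter]
  push_cast
  rfl

lemma e_eq {n : ℕ} (x y : Fin n → Bool) :
    ∑ i, chi (x i) * chi (y i) = (n : ℤ) - 2 * (hammingDist x y) := by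
  rw [hdist_cast, Finset.mul_sum]
  rw [show ∀ s : ℤ, (n:ℤ) - s = ∑ _i : Fin n, (1:ℤ) - s from fun s => by simp]
  rw [← Finset.sum_sub_distrib]
  apply Finset.sum_congr rfl
  intro i _
  rw [chi_mul_eq]

lemma odd_sum {α : Type*} (D : Finset α) (hD : Odd D.card) (g : α → ℤ)
    (hg : ∀ x ∈ D, g x = 1 ∨ g x = -1) : Odd (∑ x ∈ D, g x) := by
  rw [Int.odd_iff]
  rw [Finset.sum_int_mod]
  have h : ∑ x ∈ D, g x % 2 = ∑ x ∈ D, 1 := by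
    apply Finset.sum_congr rfl
    intro x hx
    rcases hg x hx with h | h <;> rw [h] <;> decide
  rw [h, Finset.sum_const, nsmul_eq_mul, mul_one]
  rw [Nat.odd_iff] at hD
  omega

lemma one_le_sq_of_odd (t : ℤ) (h : Odd t) : 1 ≤ t^2 := by
  have ht : t ≠ 0 := by rintro rfl; exact (Int.not_odd_iff_even.mpr Even.zero) h
  have h1 : 1 ≤ |t| := Int.one_le_abs ht
  calc (1:ℤ) = 1*1 := by ring
    _ ≤ |t| * |t| := mul_le_mul h1 h1 (by norm_num) (abs_nonneg t)
    _ = t^2 := by rw [← abs_mul, abs_mul_self, sq]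

lemma sum_A {n : ℕ} (D : Finset (Fin n → Bool)) :
    ∑ x ∈ D, ∑ y ∈ D, ∑ i, chi (x i) * chi (y i)
      = ∑ i : Fin n, (∑ x ∈ D, chi (x i))^2 := by
  have h1 : ∀ x : Fin n → Bool, ∑ y ∈ D, ∑ i : Fin n, chi (x i) * chi (y i)
      = ∑ i : Fin n, ∑ y ∈ D, chi (x i) * chi (y i) := fun x => Finset.sum_comm
  simp_rw [h1]
  rw [Finset.sum_comm]
  apply Finset.sum_congr rfl
  intro i _
  rw [sq, Finset.sum_mul_sum]

lemma sum_B {n : ℕ} (D : Finset (Fin n → Bool)) :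
    ∑ x ∈ D, ∑ y ∈ D, (∑ i, chi (x i) * chi (y i))^2
      = ∑ i : Fin n, ∑ j : Fin n, (∑ x ∈ D, chi (x i) * chi (x j))^2 := by
  have key : ∀ x y : Fin n → Bool, (∑ i, chi (x i) * chi (y i))^2
      = ∑ i : Fin n, ∑ j : Fin n, (chi (x i) * chi (x j)) * (chi (y i) * chi (y j)) := by
    intro x y
    rw [sq, Finset.sum_mul_sum]
    apply Finset.sum_congr rfl; intro i _
    apply Finset.sum_congr rfl; intro j _
    ring
  simp_rw [key]
  have c1 : ∀ x : Fin n → Bool,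
      ∑ y ∈ D, ∑ i : Fin n, ∑ j : Fin n, (chi (x i) * chi (x j)) * (chi (y i) * chi (y j))
      = ∑ i : Fin n, ∑ j : Fin n, ∑ y ∈ D, (chi (x i) * chi (x j)) * (chi (y i) * chi (y j)) := by
    intro x
    rw [Finset.sum_comm]
    apply Finset.sum_congr rfl; intro i _
    exact Finset.sum_comm
  simp_rw [c1]
  rw [Finset.sum_comm]
  apply Finset.sum_congr rfl; intro i _
  rw [Finset.sum_comm]
  apply Finset.sum_congr rfl; intro j _
  rw [sq, Finset.sum_mul_sum]

lemma no97 (D : Finset (Fin 7 → Bool))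
    (hcode : ∀ x ∈ D, ∀ y ∈ D, x ≠ y → 4 ≤ hammingDist x y)
    (hcard : D.card = 9) : False := by
  have hodd : Odd D.card := by rw [hcard]; decide
  have hAlow : (7:ℤ) ≤ ∑ i : Fin 7, (∑ x ∈ D, chi (x i))^2 := by
    have h1 : ∀ i : Fin 7, (1:ℤ) ≤ (∑ x ∈ D, chi (x i))^2 := by
      intro i
      exact one_le_sq_of_odd _ (odd_sum D hodd _ (fun x _ => by cases x i <;> simp [chi]))
    calc (7:ℤ) = ∑ _i : Fin 7, 1 := by simp
      _ ≤ _ := Finset.sum_le_sum (fun i _ => h1 i)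
  have hA : ∑ x ∈ D, ∑ y ∈ D, ((7:ℤ) - 2 * hammingDist x y)
      = ∑ i : Fin 7, (∑ x ∈ D, chi (x i))^2 := by
    rw [← sum_A]
    apply Finset.sum_congr rfl; intro x _
    apply Finset.sum_congr rfl; intro y _
    rw [e_eq]; norm_num
  have hup : ∑ x ∈ D, ∑ y ∈ D, ((7:ℤ) - 2 * hammingDist x y) ≤ -9 := by
    have hx : ∀ x ∈ D, ∑ y ∈ D, ((7:ℤ) - 2 * hammingDist x y) ≤ -1 := by
      intro x hxD
      rw [← Finset.add_sum_erase D _ hxD]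
      have h2 : ∑ y ∈ D.erase x, ((7:ℤ) - 2 * hammingDist x y)
          ≤ ∑ _y ∈ D.erase x, (-1:ℤ) := by
        apply Finset.sum_le_sum
        intro y hy
        have hyD := Finset.mem_of_mem_erase hy
        have hne : x ≠ y := (Finset.ne_of_mem_erase hy).symm
        have h4 : (4:ℤ) ≤ (hammingDist x y : ℤ) := by exact_mod_cast hcode x hxD y hyD hne
        linarith
      rw [Finset.sum_const, Finset.card_erase_of_mem hxD, hcard] at h2
      simp only [hammingDist_self, nsmul_eq_mul] at *
      push_cast at *
      linarith
    calc ∑ x ∈ D, ∑ y ∈ D, ((7:ℤ) - 2 * hammingDist x y)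
        ≤ ∑ _x ∈ D, (-1:ℤ) := Finset.sum_le_sum hx
      _ = -9 := by rw [Finset.sum_const, hcard]; norm_num
  linarith [hAlow, hA.symm.trans_le hup]

lemma no98 (D : Finset (Fin 8 → Bool)) (j : Fin 8) (b : Bool)
    (hconst : ∀ x ∈ D, x j = b)
    (hcode : ∀ x ∈ D, ∀ y ∈ D, x ≠ y → 4 ≤ hammingDist x y)
    (hcard : D.card = 9) : False := by
  have hodd : Odd D.card := by rw [hcard]; decide
  have htj : (∑ x ∈ D, chi (x j)) = 9 * chi b := by
    rw [show (9:ℤ) * chi b = ∑ _x ∈ D, chi b by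
      rw [Finset.sum_const, hcard, nsmul_eq_mul]; norm_num]
    exact Finset.sum_congr rfl (fun x hx => by rw [hconst x hx])
  have hAlow : (88:ℤ) ≤ ∑ i : Fin 8, (∑ x ∈ D, chi (x i))^2 := by
    rw [← Finset.add_sum_erase _ _ (Finset.mem_univ j)]
    have h81 : (∑ x ∈ D, chi (x j))^2 = 81 := by rw [htj]; cases b <;> norm_num [chi]
    have hrest : (7:ℤ) ≤ ∑ i ∈ Finset.univ.erase j, (∑ x ∈ D, chi (x i))^2 := by
      have h1 : ∀ i : Fin 8, (1:ℤ) ≤ (∑ x ∈ D, chi (x i))^2 := by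
        intro i
        exact one_le_sq_of_odd _ (odd_sum D hodd _ (fun x _ => by cases x i <;> simp [chi]))
      calc (7:ℤ) = ∑ _i ∈ Finset.univ.erase j, (1:ℤ) := by
            rw [Finset.sum_const, Finset.card_erase_of_mem (Finset.mem_univ j)]
            norm_num
        _ ≤ _ := Finset.sum_le_sum (fun i _ => h1 i)
    linarith
  have hA : ∑ x ∈ D, ∑ y ∈ D, ((8:ℤ) - 2 * hammingDist x y)
      = ∑ i : Fin 8, (∑ x ∈ D, chi (x i))^2 := by
    rw [← sum_A]
    apply Finset.sum_congr rfl; intro x _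
    apply Finset.sum_congr rfl; intro y _
    rw [e_eq]; norm_num
  have hup : ∑ x ∈ D, ∑ y ∈ D, ((8:ℤ) - 2 * hammingDist x y) ≤ 72 := by
    have hx : ∀ x ∈ D, ∑ y ∈ D, ((8:ℤ) - 2 * hammingDist x y) ≤ 8 := by
      intro x hxD
      rw [← Finset.add_sum_erase D _ hxD]
      have h2 : ∑ y ∈ D.erase x, ((8:ℤ) - 2 * hammingDist x y)
          ≤ ∑ _y ∈ D.erase x, (0:ℤ) := by
        apply Finset.sum_le_sum
        intro y hy
        have h4 : (4:ℤ) ≤ (hammingDist x y : ℤ) := by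
          exact_mod_cast hcode x hxD y (Finset.mem_of_mem_erase hy)
            (Finset.ne_of_mem_erase hy).symm
        linarith
      simp only [hammingDist_self, Finset.sum_const, smul_zero] at *
      push_cast at *
      linarith
    calc ∑ x ∈ D, ∑ y ∈ D, ((8:ℤ) - 2 * hammingDist x y)
        ≤ ∑ _x ∈ D, (8:ℤ) := Finset.sum_le_sum hx
      _ = 72 := by rw [Finset.sum_const, hcard, nsmul_eq_mul]; norm_num
  linarith [hAlow, hA.symm.trans_le hup]

lemma dist_compl {n : ℕ} (x y : Fin n → Bool) :
    hammingDist (fun i => !(x i)) y + hammingDist x y = n := by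
  rw [hammingDist, hammingDist]
  have h : (Finset.univ.filter fun i => (fun i => !(x i)) i ≠ y i)
      = Finset.univ.filter fun i => ¬ (x i ≠ y i) := by
    ext i
    simp only [Finset.mem_filter, Finset.mem_univ, true_and]
    cases x i <;> cases y i <;> simp
  rw [h, add_comm, Finset.card_filter_add_card_filter_not]
  simp

lemma no921 (D : Finset (Fin 9 → Bool))
    (hcode : ∀ x ∈ D, ∀ y ∈ D, x ≠ y → 4 ≤ hammingDist x y ∧ Even (hammingDist x y))
    (hcard : D.card = 21) : False := by
  have hodd : Odd D.card := by rw [hcard]; decide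
  -- lower bounds
  have hA : (9:ℤ) ≤ ∑ i : Fin 9, (∑ x ∈ D, chi (x i))^2 := by
    have h1 : ∀ i : Fin 9, (1:ℤ) ≤ (∑ x ∈ D, chi (x i))^2 := fun i =>
      one_le_sq_of_odd _ (odd_sum D hodd _ (fun x _ => by cases x i <;> simp [chi]))
    calc (9:ℤ) = ∑ _i : Fin 9, 1 := by simp
      _ ≤ _ := Finset.sum_le_sum (fun i _ => h1 i)
  have hsii : ∀ i : Fin 9, (∑ x ∈ D, chi (x i) * chi (x i)) = 21 := by
    intro i
    rw [show ∑ x ∈ D, chi (x i) * chi (x i) = ∑ _x ∈ D, (1:ℤ) from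
      Finset.sum_congr rfl (fun x _ => chi_sq _)]
    rw [Finset.sum_const, hcard, nsmul_eq_mul]; norm_num
  have hB : (4041:ℤ) ≤ ∑ i : Fin 9, ∑ j : Fin 9, (∑ x ∈ D, chi (x i) * chi (x j))^2 := by
    have hrow : ∀ i : Fin 9, (449:ℤ) ≤ ∑ j : Fin 9, (∑ x ∈ D, chi (x i) * chi (x j))^2 := by
      intro i
      rw [← Finset.add_sum_erase _ _ (Finset.mem_univ i)]
      have h441 : (∑ x ∈ D, chi (x i) * chi (x i))^2 = 441 := by rw [hsii]; norm_num
      have hrest : (8:ℤ) ≤ ∑ j ∈ Finset.univ.erase i, (∑ x ∈ D, chi (x i) * chi (x j))^2 := by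
        have h1 : ∀ j : Fin 9, (1:ℤ) ≤ (∑ x ∈ D, chi (x i) * chi (x j))^2 := fun j =>
          one_le_sq_of_odd _ (odd_sum D hodd _ (fun x _ => by
            cases x i <;> cases x j <;> simp [chi]))
        calc (8:ℤ) = ∑ _j ∈ Finset.univ.erase i, (1:ℤ) := by
              rw [Finset.sum_const, Finset.card_erase_of_mem (Finset.mem_univ i)]
              norm_num
          _ ≤ _ := Finset.sum_le_sum (fun j _ => h1 j)
      linarith
    calc (4041:ℤ) = ∑ _i : Fin 9, (449:ℤ) := by simp
      _ ≤ _ := Finset.sum_le_sum (fun i _ => hrow i)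
  -- the combined identity
  have e9 : ∀ x y : Fin 9 → Bool,
      (9:ℤ) - 2 * hammingDist x y = ∑ i, chi (x i) * chi (y i) := by
    intro x y; rw [e_eq]; norm_num
  have hAB : ∑ x ∈ D, ∑ y ∈ D,
        (2 * ((9:ℤ) - 2 * hammingDist x y) + ((9:ℤ) - 2 * hammingDist x y)^2)
      = 2 * (∑ i : Fin 9, (∑ x ∈ D, chi (x i))^2)
        + ∑ i : Fin 9, ∑ j : Fin 9, (∑ x ∈ D, chi (x i) * chi (x j))^2 := by
    simp_rw [e9]
    rw [← sum_A, ← sum_B, Finset.mul_sum, ← Finset.sum_add_distrib]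
    apply Finset.sum_congr rfl; intro x _
    rw [Finset.mul_sum, ← Finset.sum_add_distrib]
  -- upper bound
  have hup : ∑ x ∈ D, ∑ y ∈ D,
      (2 * ((9:ℤ) - 2 * hammingDist x y) + ((9:ℤ) - 2 * hammingDist x y)^2) ≤ 4011 := by
    have hx : ∀ x ∈ D, ∑ y ∈ D,
        (2 * ((9:ℤ) - 2 * hammingDist x y) + ((9:ℤ) - 2 * hammingDist x y)^2) ≤ 191 := by
      intro x hxD
      rw [← Finset.add_sum_erase D _ hxD]
      have hdiag : 2 * ((9:ℤ) - 2 * hammingDist x x) + ((9:ℤ) - 2 * hammingDist x x)^2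
          = 99 := by simp [hammingDist_self]
      set E := D.erase x with hE
      have hEcard : E.card = 20 := by rw [hE, Finset.card_erase_of_mem hxD, hcard]
      have hmem : ∀ y ∈ E, 4 ≤ hammingDist x y ∧ Even (hammingDist x y)
          ∧ hammingDist x y ≤ 9 := by
        intro y hy
        have h1 := hcode x hxD y (Finset.mem_of_mem_erase hy)
          (Finset.ne_of_mem_erase hy).symm
        refine ⟨h1.1, h1.2, ?_⟩
        calc hammingDist x y ≤ Fintype.card (Fin 9) := hammingDist_le_card_fintype
          _ = 9 := by simp
      rw [← Finset.sum_filter_add_sum_filter_not E (fun y => hammingDist x y = 8)]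
      have hk1 : (E.filter (fun y => hammingDist x y = 8)).card ≤ 1 := by
        rw [Finset.card_le_one]
        intro y hy z hz
        simp only [Finset.mem_filter] at hy hz
        by_contra hne
        have h4 := (hcode y (Finset.mem_of_mem_erase hy.1) z (Finset.mem_of_mem_erase hz.1) hne).1
        have h8y : hammingDist x y = 8 := hy.2
        have h8z : hammingDist x z = 8 := hz.2
        have htri : hammingDist y z ≤ hammingDist (fun i => !(x i)) y
            + hammingDist (fun i => !(x i)) z := by
          rw [hammingDist_comm (fun i => !(x i)) y]
          exact hammingDist_triangle _ _ _
        have hc1 : hammingDist (fun i => !(x i)) y + hammingDist x y = 9 := dist_compl x y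
        have hc2 : hammingDist (fun i => !(x i)) z + hammingDist x z = 9 := dist_compl x z
        clear hA hB hAB e9 hdiag hsii hcode hmem hodd hcard hEcard hE hy hz
        omega
      have hsum8 : ∑ y ∈ E.filter (fun y => hammingDist x y = 8),
          (2 * ((9:ℤ) - 2 * hammingDist x y) + ((9:ℤ) - 2 * hammingDist x y)^2)
          ≤ (E.filter (fun y => hammingDist x y = 8)).card • (35:ℤ) := by
        apply Finset.sum_le_card_nsmul
        intro y hy
        have h8 : hammingDist x y = 8 := (Finset.mem_filter.mp hy).2
        rw [h8]; norm_num
      have hsumr : ∑ y ∈ E.filter (fun y => ¬ hammingDist x y = 8),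
          (2 * ((9:ℤ) - 2 * hammingDist x y) + ((9:ℤ) - 2 * hammingDist x y)^2)
          ≤ (E.filter (fun y => ¬ hammingDist x y = 8)).card • (3:ℤ) := by
        apply Finset.sum_le_card_nsmul
        intro y hy
        have h8 : ¬ hammingDist x y = 8 := (Finset.mem_filter.mp hy).2
        obtain ⟨h4, he, h9⟩ := hmem y (Finset.mem_of_mem_filter y hy)
        obtain ⟨r, hr⟩ := he
        have : hammingDist x y = 4 ∨ hammingDist x y = 6 := by
          clear hA hB hAB e9 hdiag hsii hcode hmem hodd hcard hEcard hE hk1 hy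
          omega
        rcases this with h | h <;> rw [h] <;> norm_num
      have hpart : (E.filter (fun y => hammingDist x y = 8)).card
          + (E.filter (fun y => ¬ hammingDist x y = 8)).card = 20 := by
        rw [Finset.card_filter_add_card_filter_not, hEcard]
      set k := (E.filter (fun y => hammingDist x y = 8)).card
      set m := (E.filter (fun y => ¬ hammingDist x y = 8)).card
      rw [nsmul_eq_mul] at hsum8 hsumr
      have hkz : (k:ℤ) ≤ 1 := by exact_mod_cast hk1
      have hmz : (m:ℤ) = 20 - k := by
        have : (k:ℤ) + m = 20 := by exact_mod_cast hpart
        linarith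
      have hkk : (0:ℤ) ≤ k := Int.natCast_nonneg k
      linarith
    calc ∑ x ∈ D, ∑ y ∈ D,
        (2 * ((9:ℤ) - 2 * hammingDist x y) + ((9:ℤ) - 2 * hammingDist x y)^2)
        ≤ ∑ _x ∈ D, (191:ℤ) := Finset.sum_le_sum hx
      _ = 4011 := by rw [Finset.sum_const, hcard, nsmul_eq_mul]; norm_num
  linarith [hAB.symm.trans_le hup]

lemma dist_split {n : ℕ} (x y : Fin (n+1) → Bool) :
    hammingDist x y = hammingDist (fun i : Fin n => x i.castSucc) (fun i : Fin n => y i.castSucc)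
      + (if x (Fin.last n) ≠ y (Fin.last n) then 1 else 0) := by
  rw [hammingDist, hammingDist, Finset.card_filter, Finset.card_filter,
    Fin.sum_univ_castSucc]

def wt {n : ℕ} (u : Fin n → Bool) : ℕ := (Finset.univ.filter fun i => u i = true).card

def par {n : ℕ} (u : Fin n → Bool) : Bool := ((wt u : ZMod 2) == 1)

lemma odd_iff_zmod (m : ℕ) : Odd m ↔ (m : ZMod 2) = 1 := by
  rw [Nat.odd_iff]
  constructor
  · intro h; rw [← ZMod.natCast_mod, h]; rfl
  · intro h
    by_contra hne
    have h0 : m % 2 = 0 := by omega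
    rw [← ZMod.natCast_mod, h0] at h
    exact absurd h (by decide)

lemma dist_parity {n : ℕ} (u v : Fin n → Bool) :
    ((hammingDist u v : ZMod 2)) = (wt u : ZMod 2) + (wt v : ZMod 2) := by
  rw [hammingDist, wt, wt, Finset.card_filter, Finset.card_filter, Finset.card_filter]
  push_cast
  rw [← Finset.sum_add_distrib]
  apply Finset.sum_congr rfl
  intro i _
  cases hu : u i <;> cases hv : v i <;> simp <;> decide

lemma par_ne_iff {n : ℕ} (u v : Fin n → Bool) :
    par u ≠ par v ↔ Odd (hammingDist u v) := by
  rw [odd_iff_zmod, dist_parity, par, par]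
  have h1 : ∀ a b : ZMod 2, (((a == 1) : Bool) ≠ ((b == 1) : Bool)) ↔ a ≠ b := by decide
  have h2 : ∀ a b : ZMod 2, a + b = 1 ↔ a ≠ b := by decide
  rw [h1, h2]

def phi (x : Fin 9 → Bool) : Fin 9 → Bool :=
  Fin.snoc (fun i : Fin 8 => x i.castSucc) (par (fun i : Fin 8 => x i.castSucc))

lemma phi_dist (a b : Fin 9 → Bool) :
    hammingDist (phi a) (phi b)
      = hammingDist (fun i : Fin 8 => a i.castSucc) (fun i : Fin 8 => b i.castSucc)
        + (if par (fun i : Fin 8 => a i.castSucc) ≠ par (fun i : Fin 8 => b i.castSucc)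
            then 1 else 0) := by
  rw [dist_split (phi a) (phi b)]
  simp only [phi, Fin.snoc_castSucc, Fin.snoc_last]

lemma ub9 (C : Finset (Fin 9 → Bool)) (h : isBinCode 9 4 C) : C.card ≤ 20 := by
  by_contra hlt
  push_neg at hlt
  obtain ⟨D0, hD0C, hD0⟩ := Finset.exists_subset_card_eq (show 21 ≤ C.card by omega)
  have hD0code : ∀ x ∈ D0, ∀ y ∈ D0, x ≠ y → 4 ≤ hammingDist x y :=
    fun x hx y hy hxy => h x (hD0C hx) y (hD0C hy) hxy
  have hd8 : ∀ a ∈ D0, ∀ b ∈ D0, a ≠ b →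
      3 ≤ hammingDist (fun i : Fin 8 => a i.castSucc) (fun i : Fin 8 => b i.castSucc) := by
    intro a ha b hb hab
    have h4 := hD0code a ha b hb hab
    have hsp := dist_split a b
    split at hsp <;> omega
  have hinj : Set.InjOn phi D0 := by
    intro a ha b hb hab
    by_contra hne
    have h3 := hd8 a ha b hb hne
    have : hammingDist (fun i : Fin 8 => a i.castSucc) (fun i : Fin 8 => b i.castSucc) = 0 := by
      rw [hammingDist_eq_zero]
      funext i
      have := congrFun hab i.castSucc
      rwa [phi, phi, Fin.snoc_castSucc, Fin.snoc_castSucc] at this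
    omega
  have hcard : (D0.image phi).card = 21 := by
    rw [Finset.card_image_of_injOn hinj, hD0]
  have hDcode : ∀ u ∈ D0.image phi, ∀ v ∈ D0.image phi, u ≠ v →
      4 ≤ hammingDist u v ∧ Even (hammingDist u v) := by
    intro u hu v hv huv
    obtain ⟨a, ha, rfl⟩ := Finset.mem_image.mp hu
    obtain ⟨b, hb, rfl⟩ := Finset.mem_image.mp hv
    have hab : a ≠ b := fun hh => huv (by rw [hh])
    have h3 := hd8 a ha b hb hab
    rw [phi_dist a b]
    set u8 := fun i : Fin 8 => a i.castSucc
    set v8 := fun i : Fin 8 => b i.castSucc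
    by_cases hp : par u8 = par v8
    · have heven : Even (hammingDist u8 v8) := by
        rcases Nat.even_or_odd (hammingDist u8 v8) with he | ho
        · exact he
        · exact absurd ho (by rw [← par_ne_iff]; simp [hp])
      obtain ⟨r, hr⟩ := heven
      simp only [hp, ne_eq, not_true_eq_false, if_neg, ite_false]
      constructor
      · omega
      · exact ⟨r, by omega⟩
    · have hodd : Odd (hammingDist u8 v8) := (par_ne_iff u8 v8).mp hp
      obtain ⟨r, hr⟩ := hodd
      simp only [hp, ne_eq, not_false_eq_true, if_pos, ite_true]
      constructor
      · omega
      · exact ⟨r + 1, by omega⟩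
  exact no921 (D0.image phi) hDcode hcard

lemma ub7 (C : Finset (Fin 7 → Bool)) (h : isBinCode 7 4 C) : C.card ≤ 8 := by
  by_contra hlt
  push_neg at hlt
  obtain ⟨D, hDC, hD⟩ := Finset.exists_subset_card_eq (show 9 ≤ C.card by omega)
  exact no97 D (fun x hx y hy hxy => h x (hDC hx) y (hDC hy) hxy) hD

lemma ub8 (C : Finset (Fin 8 → Bool)) (h : isBinCode 8 4 C) : C.card ≤ 16 := by
  by_contra hlt
  push_neg at hlt
  have hsplit : (C.filter (fun x => x 7 = true)).card
      + (C.filter (fun x => ¬ x 7 = true)).card = C.card :=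
    Finset.card_filter_add_card_filter_not _
  set c1 := (C.filter (fun x => x 7 = true)).card with hc1
  set c2 := (C.filter (fun x => ¬ x 7 = true)).card with hc2
  have : 9 ≤ c1 ∨ 9 ≤ c2 := by
    clear hc1 hc2 h
    clear_value c1 c2
    omega
  rcases this with hc | hc
  · obtain ⟨D, hDC, hD⟩ := Finset.exists_subset_card_eq hc
    refine no98 D 7 true ?_ ?_ hD
    · intro x hx
      exact (Finset.mem_filter.mp (hDC hx)).2
    · intro x hx y hy hxy
      exact h x (Finset.mem_of_mem_filter x (hDC hx)) y (Finset.mem_of_mem_filter y (hDC hy)) hxy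
  · obtain ⟨D, hDC, hD⟩ := Finset.exists_subset_card_eq hc
    refine no98 D 7 false ?_ ?_ hD
    · intro x hx
      have := (Finset.mem_filter.mp (hDC hx)).2
      simpa using this
    · intro x hx y hy hxy
      exact h x (Finset.mem_of_mem_filter x (hDC hx)) y (Finset.mem_of_mem_filter y (hDC hy)) hxy

def L7 : List (Fin 7 → Bool) :=
  [![false, false, false, false, false, false, false],
  ![true, true, true, true, false, false, false],
  ![true, true, false, false, true, true, false],
  ![false, false, true, true, true, true, false],
  ![true, false, true, false, true, false, true],
  ![false, true, false, true, true, false, true],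
  ![false, true, true, false, false, true, true],
  ![true, false, false, true, false, true, true]]

def L8 : List (Fin 8 → Bool) :=
  [![false, false, false, false, false, false, false, false],
  ![true, true, true, true, false, false, false, false],
  ![true, true, false, false, true, true, false, false],
  ![false, false, true, true, true, true, false, false],
  ![true, false, true, false, true, false, true, false],
  ![false, true, false, true, true, false, true, false],
  ![false, true, true, false, false, true, true, false],
  ![true, false, false, true, false, true, true, false],
  ![false, true, true, false, true, false, false, true],
  ![true, false, false, true, true, false, false, true],
  ![true, false, true, false, false, true, false, true],
  ![false, true, false, true, false, true, false, true],
  ![true, true, false, false, false, false, true, true],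
  ![false, false, true, true, false, false, true, true],
  ![false, false, false, false, true, true, true, true],
  ![true, true, true, true, true, true, true, true]]

def L9 : List (Fin 9 → Bool) :=
  [![true, true, false, true, false, true, true, true, true],
  ![false, false, false, false, true, false, false, false, false],
  ![false, true, false, false, false, false, true, true, false],
  ![false, true, true, true, true, true, false, true, true],
  ![false, false, false, false, false, true, false, true, true],
  ![true, false, true, false, true, false, true, true, true],
  ![true, true, true, false, false, true, false, true, false],
  ![false, true, false, true, true, false, true, false, true],
  ![false, true, false, true, false, true, false, false, false],
  ![true, false, false, true, false, false, false, false, true],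
  ![true, false, false, false, false, true, true, false, false],
  ![true, false, true, true, true, true, false, false, false],
  ![false, false, true, true, false, false, false, true, false],
  ![true, true, false, false, true, true, false, false, true],
  ![false, false, true, true, false, true, true, false, true],
  ![true, true, false, true, true, false, false, true, false],
  ![false, false, false, true, true, true, true, true, false],
  ![false, true, true, false, false, false, false, false, true],
  ![true, true, true, true, false, false, true, false, false],
  ![false, true, true, false, true, true, true, false, false]]

lemma L7_nodup : L7.Nodup := by decide
lemma L8_nodup : L8.Nodup := by decide
lemma L9_nodup : L9.Nodup := by decide

lemma L7_pw : L7.Pairwise (fun a b => 4 ≤ hammingDist a b) := by decide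
lemma L8_pw : L8.Pairwise (fun a b => 4 ≤ hammingDist a b) := by decide
lemma L9_pw : L9.Pairwise (fun a b => 4 ≤ hammingDist a b) := by decide

lemma dist_symm {n : ℕ} : Symmetric (fun a b : Fin n → Bool => 4 ≤ hammingDist a b) := by
  intro a b h
  rwa [hammingDist_comm]

lemma code_of_list {n : ℕ} (l : List (Fin n → Bool))
    (hpw : l.Pairwise (fun a b => 4 ≤ hammingDist a b)) : isBinCode n 4 l.toFinset := by
  intro c hc c' hc' hne
  haveI : Std.Symm (fun a b : Fin n → Bool => 4 ≤ hammingDist a b) := ⟨fun a b h => dist_symm h⟩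
  exact List.Pairwise.forall hpw (List.mem_toFinset.mp hc) (List.mem_toFinset.mp hc') hne

lemma M2_eq {ℓ d k : ℕ} (C : Finset (Fin ℓ → Bool)) (hC : isBinCode ℓ d C)
    (hcard : C.card = k)
    (hub : ∀ B : Finset (Fin ℓ → Bool), isBinCode ℓ d B → B.card ≤ k) : M2 ℓ d = k := by
  have hmem : k ∈ {M | ∃ C : Finset (Fin ℓ → Bool), isBinCode ℓ d C ∧ C.card = M} :=
    ⟨C, hC, hcard⟩
  apply le_antisymm
  · apply csSup_le ⟨k, hmem⟩
    rintro m ⟨B, hB, rfl⟩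
    exact hub B hB
  · apply le_csSup ?_ hmem
    refine ⟨2^ℓ, ?_⟩
    rintro m ⟨B, _hB, rfl⟩
    calc B.card ≤ Fintype.card (Fin ℓ → Bool) := Finset.card_le_univ B
      _ = 2^ℓ := by simp

lemma M2_7 : M2 7 4 = 8 :=
  M2_eq L7.toFinset (code_of_list L7 L7_pw)
    (by rw [List.toFinset_card_of_nodup L7_nodup]; rfl) ub7

lemma M2_8 : M2 8 4 = 16 :=
  M2_eq L8.toFinset (code_of_list L8 L8_pw)
    (by rw [List.toFinset_card_of_nodup L8_nodup]; rfl) ub8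

lemma M2_9 : M2 9 4 = 20 :=
  M2_eq L9.toFinset (code_of_list L9 L9_pw)
    (by rw [List.toFinset_card_of_nodup L9_nodup]; rfl) ub9

theorem M2_not_log_convex :
    M2 7 4 = 8 ∧ M2 8 4 = 16 ∧ M2 9 4 = 20 ∧
    M2 7 4 * M2 9 4 < M2 8 4 ^ 2 := by
  refine ⟨M2_7, M2_8, M2_9, ?_⟩
  rw [M2_7, M2_8, M2_9]
  norm_num
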